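/- Define φ : A_t → ℂ⁵ (with coordinates indexed by {φ-class, ee, eo, oe, oo}) sending e_{(0,0)} to the generator of the φ-coordinate and e_{(p,q)} for (p,q) ≠ (0,0) to the generator of the coordinate determined by the parities (p mod 2, q mod 2), extended linearly. Then φ vanishes on every commutator: φ(a*b - b*a) = 0 for all a, b ∈ A_t. -/

import Mathlib

noncomputable section

def negRel : Setoid (ℤ × ℤ) where
  r v w := v = w ∨ v = -w
  iseqv := by
    refine ⟨fun v => Or.inl rfl, ?_, ?_⟩
    · rintro v w (rfl | rfl) <;> simp
    · rintro u v w (rfl | rfl) (h | h) <;> simp_all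

/-- The index set `ℤ² / ±1`. -/
abbrev Q2 := Quotient negRel

/-- The underlying vector space of the Frohman–Gelca algebra: the free `ℂ`-module on `ℤ²/±1`. -/
abbrev FG := Q2 →₀ ℂ

/-- The basis vector `e_{(p,q)}`. -/
def e (v : ℤ × ℤ) : FG := Finsupp.single (Quotient.mk negRel v) 1

lemma e_neg (v : ℤ × ℤ) : e (-v) = e v := by
  unfold e
  congr 1
  exact Quotient.sound (Or.inr rfl)

/-- The determinant `p s - q r`. -/
def det (v w : ℤ × ℤ) : ℤ := v.1 * w.2 - v.2 * w.1

/-- Product-to-sum formula on representatives. -/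
def mulB (t : ℂ) (v w : ℤ × ℤ) : FG :=
  t ^ (det v w) • e (v + w) + t ^ (-(det v w)) • e (v - w)

lemma mulB_negL (t : ℂ) (v w : ℤ × ℤ) : mulB t (-v) w = mulB t v w := by
  unfold mulB
  have hd : det (-v) w = -(det v w) := by simp [det]; ring
  rw [hd, neg_neg, show -v + w = -(v - w) by abel, show -v - w = -(v + w) by abel,
    e_neg, e_neg, add_comm]

lemma mulB_negR (t : ℂ) (v w : ℤ × ℤ) : mulB t v (-w) = mulB t v w := by
  unfold mulB
  have hd : det v (-w) = -(det v w) := by simp [det]; ring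
  rw [hd, neg_neg, show v + -w = v - w by abel, show v - -w = v + w by abel, add_comm]

/-- Product-to-sum formula on the quotient `ℤ²/±1`. -/
def qmulB (t : ℂ) : Q2 → Q2 → FG :=
  Quotient.lift₂ (mulB t) (by
    rintro a b a' b' (rfl | rfl) (rfl | rfl)
    · rfl
    · rw [mulB_negR]
    · rw [mulB_negL]
    · rw [mulB_negL, mulB_negR])

/-- Multiplication in the Frohman–Gelca algebra, extended bilinearly. -/
def fgMul (t : ℂ) (a b : FG) : FG :=
  a.sum fun x c => b.sum fun y d => (c * d) • qmulB t x y

/-- The span of commutators `C(A_t)`. -/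
def commSpan (t : ℂ) : Submodule ℂ FG :=
  Submodule.span ℂ {x | ∃ a b : FG, x = fgMul t a b - fgMul t b a}


/-- The class of a pair: `0` for `(0,0)`, then `ee`, `eo`, `oe`, `oo`. -/
def cls (v : ℤ × ℤ) : Fin 5 :=
  if v = 0 then 0
  else if Even v.1 then (if Even v.2 then 1 else 2)
  else if Even v.2 then 3 else 4

def qcls : Q2 → Fin 5 :=
  Quotient.lift cls (by
    rintro a b (rfl | rfl)
    · rfl
    · simp [cls, neg_eq_zero, Prod.fst_neg, Prod.snd_neg])

/-- The parity map `φ : A_t → ℂ⁵`. -/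
def phiL : FG →ₗ[ℂ] (Fin 5 → ℂ) :=
  Finsupp.lsum ℂ fun x => LinearMap.toSpanSingleton ℂ (Fin 5 → ℂ) (Pi.single (qcls x) 1)


lemma phiL_e (u : ℤ × ℤ) : phiL (e u) = Pi.single (cls u) 1 := by
  simp [phiL, e, qcls]

lemma zpow_ne_one_aux (t : ℂ) (ht : t ≠ 0) (hroot : ∀ n : ℕ, 0 < n → t ^ n ≠ 1)
    (m : ℤ) (hm : m ≠ 0) : t ^ m ≠ 1 := by
  rcases lt_or_gt_of_ne hm with h | h
  · rw [show m = -(-m) by ring, zpow_neg, ne_eq, inv_eq_one]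
    rw [show -m = ((-m).toNat : ℤ) by omega, zpow_natCast]
    exact hroot _ (by omega)
  · rw [show m = (m.toNat : ℤ) by omega, zpow_natCast]
    exact hroot _ (by omega)

lemma cls_add_sub (v w : ℤ × ℤ) (hd : det v w ≠ 0) : cls (v + w) = cls (v - w) := by
  have h1 : v + w ≠ 0 := by
    intro h
    apply hd
    have hv : v = -w := eq_neg_of_add_eq_zero_left h
    simp [det, hv]; ring
  have h2 : v - w ≠ 0 := by
    intro h
    apply hd
    have hv : v = w := sub_eq_zero.mp h
    simp [det, hv]; ring
  simp [cls, h1, h2, Prod.fst_add, Prod.snd_add, Prod.fst_sub, Prod.snd_sub,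
    Int.even_add, Int.even_sub]

lemma phiL_mulB_comm (t : ℂ) (ht : t ≠ 0) (hroot : ∀ n : ℕ, 0 < n → t ^ n ≠ 1)
    (v w : ℤ × ℤ) : phiL (mulB t v w) = phiL (mulB t w v) := by
  unfold mulB
  have hd : det w v = -(det v w) := by simp [det]; ring
  rw [hd, neg_neg, show w + v = v + w by abel, show w - v = -(v - w) by abel, e_neg]
  by_cases h0 : det v w = 0
  · rw [h0]; simp
  · rw [map_add, map_add, map_smul, map_smul, map_smul, map_smul,
      phiL_e (v + w), phiL_e (v - w), cls_add_sub v w h0]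
    ring

lemma phiL_qmulB_comm (t : ℂ) (ht : t ≠ 0) (hroot : ∀ n : ℕ, 0 < n → t ^ n ≠ 1)
    (x y : Q2) : phiL (qmulB t x y) = phiL (qmulB t y x) :=
  Quotient.inductionOn₂ x y (fun v w => phiL_mulB_comm t ht hroot v w)

theorem stmt6 (t : ℂ) (ht : t ≠ 0) (hroot : ∀ n : ℕ, 0 < n → t ^ n ≠ 1)
    (a b : FG) : phiL (fgMul t a b - fgMul t b a) = 0 := by
  rw [map_sub, sub_eq_zero]
  unfold fgMul
  rw [map_finsuppSum, map_finsuppSum]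
  simp only [map_finsuppSum, map_smul]
  rw [Finsupp.sum_comm]
  exact Finsupp.sum_congr fun y _ => Finsupp.sum_congr fun x _ => by
    rw [mul_comm, phiL_qmulB_comm t ht hroot x y]

end
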